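/- (Theorem 1, Golub–Hoffman–Stewart.) Let A = (A₁ A₂) ∈ ℝ^{m×n} with A₁ ∈ ℝ^{m×k}, A₂ ∈ ℝ^{m×(n−k)}, rank(A₁) = k, and let r be an integer with k ≤ r. Let P_{A₁} denote the orthogonal projection onto the column space of A₁ and P⊥_{A₁} the orthogonal projection onto its orthogonal complement. Define B̃₂ := P_{A₁}(A₂) + H_{r−k}(P⊥_{A₁}(A₂)). Then the block matrix (A₁ B̃₂) satisfies rank(A₁ B̃₂) ≤ r, and for every B₂ ∈ ℝ^{m×(n−k)} such that rank(A₁ B₂) ≤ r one has ‖A₂ − B̃₂‖_F ≤ ‖A₂ − B₂‖_F; i.e., B̃₂ solves the constrained low-rank approximation problem min_{B=(B₁ B₂), B₁=A₁, rank(B)≤r} ‖A − B‖_F². -/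

import Mathlib

open Matrix

/-- Frobenius norm of a real matrix. -/
noncomputable def frobNorm {m n : ℕ} (A : Matrix (Fin m) (Fin n) ℝ) : ℝ :=
  Real.sqrt (∑ i, ∑ j, (A i j) ^ 2)

/-- Column space of a matrix, as a subspace of Euclidean space. -/
noncomputable def colSpace {m k : ℕ} (A : Matrix (Fin m) (Fin k) ℝ) :
    Submodule ℝ (EuclideanSpace ℝ (Fin m)) :=
  LinearMap.range (Matrix.toEuclideanLin A)

/-- `P_{A₁}`: orthogonal projection onto the column space of `A₁`, applied columnwise. -/
noncomputable def projCols {m k l : ℕ} (A₁ : Matrix (Fin m) (Fin k) ℝ)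
    (B : Matrix (Fin m) (Fin l) ℝ) : Matrix (Fin m) (Fin l) ℝ :=
  Matrix.of fun i j =>
    (Submodule.orthogonalProjectionOnto (colSpace A₁) (WithLp.toLp 2 fun i' => B i' j) : EuclideanSpace ℝ (Fin m)) i

/-- `P⊥_{A₁}`: orthogonal projection onto the orthogonal complement of the column
space of `A₁`, applied columnwise. -/
noncomputable def projOrthCols {m k l : ℕ} (A₁ : Matrix (Fin m) (Fin k) ℝ)
    (B : Matrix (Fin m) (Fin l) ℝ) : Matrix (Fin m) (Fin l) ℝ :=
  Matrix.of fun i j =>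
    (Submodule.orthogonalProjectionOnto (colSpace A₁)ᗮ (WithLp.toLp 2 fun i' => B i' j) : EuclideanSpace ℝ (Fin m)) i



noncomputable def frobSq {m n : ℕ} (A : Matrix (Fin m) (Fin n) ℝ) : ℝ := ∑ i, ∑ j, (A i j) ^ 2

lemma frobSq_nonneg {m n : ℕ} (A : Matrix (Fin m) (Fin n) ℝ) : 0 ≤ frobSq A :=
  Finset.sum_nonneg fun _ _ => Finset.sum_nonneg fun _ _ => sq_nonneg _

lemma frobSq_eq_trace {m n : ℕ} (A : Matrix (Fin m) (Fin n) ℝ) :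
    frobSq A = Matrix.trace (Aᵀ * A) := by
  unfold frobSq
  rw [Matrix.trace]
  rw [Finset.sum_comm]
  congr 1; ext j
  simp [Matrix.mul_apply, Matrix.diag, sq]

lemma sum_mul_eq_trace {m n : ℕ} (A B : Matrix (Fin m) (Fin n) ℝ) :
    Matrix.trace (Aᵀ * B) = ∑ i, ∑ j, A i j * B i j := by
  rw [Matrix.trace]
  rw [show ∀ f : Fin n → ℝ, ∑ j, f j = ∑ j, f j from fun _ => rfl]
  simp only [Matrix.diag, Matrix.mul_apply, Matrix.transpose_apply]
  rw [Finset.sum_comm]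

lemma frobSq_add {m n : ℕ} (A B : Matrix (Fin m) (Fin n) ℝ) :
    frobSq (A + B) = frobSq A + frobSq B + 2 * Matrix.trace (Aᵀ * B) := by
  rw [frobSq_eq_trace, frobSq_eq_trace, frobSq_eq_trace]
  have : (A + B)ᵀ * (A + B) = Aᵀ * A + Bᵀ * B + (Aᵀ * B + Bᵀ * A) := by
    rw [Matrix.transpose_add, Matrix.add_mul, Matrix.mul_add, Matrix.mul_add]; abel
  rw [this]
  have h2 : Matrix.trace (Bᵀ * A) = Matrix.trace (Aᵀ * B) := by
    rw [← Matrix.trace_transpose (Bᵀ * A), Matrix.transpose_mul, Matrix.transpose_transpose]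
  simp only [Matrix.trace_add, h2]; ring
lemma frobSq_mul_proj_le {m n : ℕ} (M : Matrix (Fin m) (Fin n) ℝ)
    (Pi : Matrix (Fin n) (Fin n) ℝ) (hsym : Piᵀ = Pi) (hidem : Pi * Pi = Pi) :
    frobSq (M * Pi) ≤ frobSq M := by
  have hdecomp : M = M * Pi + M * (1 - Pi) := by
    rw [Matrix.mul_sub, Matrix.mul_one]; abel
  have hcross : Matrix.trace ((M * Pi)ᵀ * (M * (1 - Pi))) = 0 := by
    have h1 : (M * Pi)ᵀ * (M * (1 - Pi)) = Pi * (Mᵀ * M * (1 - Pi)) := by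
      rw [Matrix.transpose_mul, hsym]
      simp only [Matrix.mul_assoc]
    rw [h1, Matrix.trace_mul_comm]
    have h2 : Mᵀ * M * (1 - Pi) * Pi = 0 := by
      rw [Matrix.mul_assoc, Matrix.sub_mul, Matrix.one_mul, hidem, sub_self, Matrix.mul_zero]
    rw [h2, Matrix.trace_zero]
  calc frobSq (M * Pi) ≤ frobSq (M * Pi) + frobSq (M * (1 - Pi)) := le_add_of_nonneg_right (frobSq_nonneg _)
    _ = frobSq M := by
        conv_rhs => rw [hdecomp]
        rw [frobSq_add, hcross]; ring

lemma frobSq_orth_mul {m n : ℕ} (P : Matrix (Fin m) (Fin m) ℝ) (hP : Pᵀ * P = 1)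
    (M : Matrix (Fin m) (Fin n) ℝ) : frobSq (P * M) = frobSq M := by
  rw [frobSq_eq_trace, frobSq_eq_trace, Matrix.transpose_mul]
  rw [show Mᵀ * Pᵀ * (P * M) = Mᵀ * (Pᵀ * P) * M by simp only [Matrix.mul_assoc], hP,
    Matrix.mul_one]

lemma frobSq_mul_orth {m n : ℕ} (Q : Matrix (Fin n) (Fin n) ℝ) (hQ : Qᵀ * Q = 1)
    (M : Matrix (Fin m) (Fin n) ℝ) : frobSq (M * Qᵀ) = frobSq M := by
  rw [frobSq_eq_trace, frobSq_eq_trace, Matrix.transpose_mul, Matrix.transpose_transpose]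
  rw [show Q * Mᵀ * (M * Qᵀ) = Q * (Mᵀ * M * Qᵀ) by simp only [Matrix.mul_assoc],
    Matrix.trace_mul_comm, Matrix.mul_assoc, hQ, Matrix.mul_one]

lemma orth_facts {n : ℕ} (P : Matrix (Fin n) (Fin n) ℝ)
    (hP : P ∈ Matrix.orthogonalGroup (Fin n) ℝ) : P * Pᵀ = 1 ∧ Pᵀ * P = 1 := by
  have h1 := (Matrix.mem_orthogonalGroup_iff (Fin n) ℝ).mp hP
  have h2 := (Matrix.mem_orthogonalGroup_iff' (Fin n) ℝ).mp hP
  have hstar : star P = Pᵀ := by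
    ext i j; simp [Matrix.star_apply]
  exact ⟨h1, h2⟩
section Euclid
variable {m k l : ℕ} (A₁ : Matrix (Fin m) (Fin k) ℝ)

lemma projCols_apply (B : Matrix (Fin m) (Fin l) ℝ) (i : Fin m) (j : Fin l) :
    projCols A₁ B i j =
      (Submodule.orthogonalProjectionOnto (colSpace A₁) (WithLp.toLp 2 fun i' => B i' j) : EuclideanSpace ℝ (Fin m)) i := rfl

lemma projOrthCols_apply (B : Matrix (Fin m) (Fin l) ℝ) (i : Fin m) (j : Fin l) :
    projOrthCols A₁ B i j =
      (Submodule.orthogonalProjectionOnto (colSpace A₁)ᗮ (WithLp.toLp 2 fun i' => B i' j) : EuclideanSpace ℝ (Fin m)) i := rfl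

lemma proj_add_projOrth (B : Matrix (Fin m) (Fin l) ℝ) :
    projCols A₁ B + projOrthCols A₁ B = B := by
  ext i j
  have h := Submodule.starProjection_add_starProjection_orthogonal (K := colSpace A₁)
    (show EuclideanSpace ℝ (Fin m) from WithLp.toLp 2 fun i' => B i' j)
  have h2 := congrArg (fun v : EuclideanSpace ℝ (Fin m) => v i) h
  simpa [Matrix.add_apply, projCols, projOrthCols] using h2

lemma projOrthCols_sub (X Y : Matrix (Fin m) (Fin l) ℝ) :
    projOrthCols A₁ (X - Y) = projOrthCols A₁ X - projOrthCols A₁ Y := by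
  ext i j
  set x : EuclideanSpace ℝ (Fin m) := WithLp.toLp 2 fun i' => X i' j with hx
  set y : EuclideanSpace ℝ (Fin m) := WithLp.toLp 2 fun i' => Y i' j with hy
  calc projOrthCols A₁ (X - Y) i j
      = (Submodule.orthogonalProjectionOnto (colSpace A₁)ᗮ (x - y) : EuclideanSpace ℝ (Fin m)) i := rfl
    _ = ((Submodule.orthogonalProjectionOnto (colSpace A₁)ᗮ x - Submodule.orthogonalProjectionOnto (colSpace A₁)ᗮ y :
          (colSpace A₁)ᗮ) : EuclideanSpace ℝ (Fin m)) i := by rw [map_sub]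
    _ = (projOrthCols A₁ X - projOrthCols A₁ Y) i j := rfl

lemma frobSq_decomp (B : Matrix (Fin m) (Fin l) ℝ) :
    frobSq B = frobSq (projCols A₁ B) + frobSq (projOrthCols A₁ B) := by
  have hsw : ∀ M : Matrix (Fin m) (Fin l) ℝ, frobSq M = ∑ j, ∑ i, (M i j) ^ 2 := by
    intro M; exact Finset.sum_comm
  rw [hsw, hsw, hsw, ← Finset.sum_add_distrib]
  refine Finset.sum_congr rfl fun j _ => ?_
  set x : EuclideanSpace ℝ (Fin m) := WithLp.toLp 2 fun i' => B i' j with hx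
  set u : EuclideanSpace ℝ (Fin m) := (Submodule.orthogonalProjectionOnto (colSpace A₁) x : EuclideanSpace ℝ (Fin m))
  set v : EuclideanSpace ℝ (Fin m) := (Submodule.orthogonalProjectionOnto (colSpace A₁)ᗮ x : EuclideanSpace ℝ (Fin m))
  have huv : u + v = x := Submodule.starProjection_add_starProjection_orthogonal (K := colSpace A₁) x
  have hinner : (inner ℝ u v : ℝ) = 0 :=
    Submodule.inner_right_of_mem_orthogonal (Submodule.orthogonalProjectionOnto (colSpace A₁) x).2
      (Submodule.orthogonalProjectionOnto (colSpace A₁)ᗮ x).2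
  have hinner' : ∑ i, u i * v i = 0 := by
    rw [← hinner]; simp [PiLp.inner_apply, RCLike.inner_apply, mul_comm]
  have hB : ∀ i, B i j = u i + v i := fun i =>
    (congrArg (fun w : EuclideanSpace ℝ (Fin m) => w i) huv).symm
  have hup : ∀ i, projCols A₁ B i j = u i := fun i => rfl
  have hvp : ∀ i, projOrthCols A₁ B i j = v i := fun i => rfl
  calc ∑ i, (B i j) ^ 2 = ∑ i, ((u i) ^ 2 + (v i) ^ 2 + 2 * (u i * v i)) := by
        refine Finset.sum_congr rfl fun i _ => ?_; rw [hB i]; ring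
    _ = ∑ i, (u i) ^ 2 + ∑ i, (v i) ^ 2 + 2 * ∑ i, u i * v i := by
        rw [Finset.sum_add_distrib, Finset.sum_add_distrib, Finset.mul_sum]
    _ = ∑ i, (projCols A₁ B i j) ^ 2 + ∑ i, (projOrthCols A₁ B i j) ^ 2 := by
        rw [hinner']; simp [hup, hvp]

end Euclid
section Bridge
variable {m k l : ℕ} (A₁ : Matrix (Fin m) (Fin k) ℝ)

lemma mem_colSpace_iff (x : Fin m → ℝ) :
    (show EuclideanSpace ℝ (Fin m) from WithLp.toLp 2 x) ∈ colSpace A₁ ↔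
      x ∈ LinearMap.range A₁.mulVecLin := by
  constructor
  · rintro ⟨v, hv⟩
    refine ⟨WithLp.equiv 2 _ v, ?_⟩
    exact congrArg WithLp.ofLp hv
  · rintro ⟨v, hv⟩
    refine ⟨(WithLp.equiv 2 _).symm v, ?_⟩
    exact congrArg (WithLp.toLp 2) hv

lemma range_projCols_le (B : Matrix (Fin m) (Fin l) ℝ) :
    LinearMap.range (projCols A₁ B).mulVecLin ≤ LinearMap.range A₁.mulVecLin := by
  rw [Matrix.range_mulVecLin, Submodule.span_le]
  rintro x ⟨j, rfl⟩
  exact (mem_colSpace_iff A₁ (fun i => projCols A₁ B i j)).mp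
    ((Submodule.orthogonalProjectionOnto (colSpace A₁)
      (show EuclideanSpace ℝ (Fin m) from WithLp.toLp 2 fun i' => B i' j)).2)

lemma range_projOrthCols_le (B : Matrix (Fin m) (Fin l) ℝ) :
    LinearMap.range (projOrthCols A₁ B).mulVecLin ≤
      Submodule.comap ((WithLp.linearEquiv 2 ℝ (Fin m → ℝ)).symm.toLinearMap)
        (colSpace A₁)ᗮ := by
  rw [Matrix.range_mulVecLin, Submodule.span_le]
  rintro x ⟨j, rfl⟩
  exact (Submodule.orthogonalProjectionOnto (colSpace A₁)ᗮ
      (show EuclideanSpace ℝ (Fin m) from WithLp.toLp 2 fun i' => B i' j)).2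

end Bridge
section Rank
variable {m k l r : ℕ} (A₁ : Matrix (Fin m) (Fin k) ℝ)

lemma rank_constraint (B₂ : Matrix (Fin m) (Fin l) ℝ)
    (h : (Matrix.fromCols A₁ B₂).rank ≤ r) :
    (projOrthCols A₁ B₂).rank + A₁.rank ≤ r := by
  classical
  set U := LinearMap.range A₁.mulVecLin with hU
  set W := LinearMap.range (projOrthCols A₁ B₂).mulVecLin with hW
  set F := LinearMap.range (Matrix.fromCols A₁ B₂).mulVecLin with hF
  have hUF : U ≤ F := by
    rintro x ⟨v, rfl⟩
    refine ⟨Sum.elim v 0, ?_⟩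
    simp [Matrix.mulVecLin_apply]
  have hcolB : ∀ j, B₂ᵀ j ∈ F := fun j => ⟨Sum.elim 0 (Pi.single j 1), by
    simp only [Matrix.mulVecLin_apply, Matrix.fromCols_mulVec_sumElim,
      Matrix.mulVec_zero, Matrix.mulVec_single_one, zero_add]; rfl⟩
  have hWF : W ≤ F := by
    rw [hW, Matrix.range_mulVecLin, Submodule.span_le]
    rintro x ⟨j, rfl⟩
    have hdec : projOrthCols A₁ B₂ = B₂ - projCols A₁ B₂ :=
      eq_sub_of_add_eq' (proj_add_projOrth A₁ B₂)
    have hcol : (projOrthCols A₁ B₂)ᵀ j = B₂ᵀ j - (projCols A₁ B₂)ᵀ j := by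
      rw [hdec]; rfl
    rw [show (projOrthCols A₁ B₂).col j = _ from hcol]
    refine Submodule.sub_mem _ (hcolB j) (hUF (range_projCols_le A₁ B₂ ?_))
    exact ⟨Pi.single j 1, by
      simp only [Matrix.mulVecLin_apply, Matrix.mulVec_single_one]; rfl⟩
  have hdisj : U ⊓ W = ⊥ := by
    rw [Submodule.eq_bot_iff]
    intro x hx
    rw [Submodule.mem_inf] at hx
    have h1 : (show EuclideanSpace ℝ (Fin m) from WithLp.toLp 2 x) ∈ colSpace A₁ :=
      (mem_colSpace_iff A₁ x).mpr hx.1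
    have h2 : (show EuclideanSpace ℝ (Fin m) from WithLp.toLp 2 x) ∈ (colSpace A₁)ᗮ :=
      range_projOrthCols_le A₁ B₂ hx.2
    have h3 : (show EuclideanSpace ℝ (Fin m) from WithLp.toLp 2 x) = 0 := by
      have := Submodule.inner_right_of_mem_orthogonal h1 h2
      exact inner_self_eq_zero.mp this
    exact congrArg WithLp.ofLp h3
  have hsum := Submodule.finrank_sup_add_finrank_inf_eq U W
  rw [hdisj, finrank_bot, add_zero] at hsum
  have hle : Module.finrank ℝ ↥(U ⊔ W) ≤ Module.finrank ℝ F :=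
    Submodule.finrank_mono (sup_le hUF hWF)
  have hWr : Module.finrank ℝ ↥W = (projOrthCols A₁ B₂).rank := rfl
  have hUr : Module.finrank ℝ ↥U = A₁.rank := rfl
  have h2 : Module.finrank ℝ F = (Matrix.fromCols A₁ B₂).rank := rfl
  omega

lemma rank_part1 (X Hm B₂t : Matrix (Fin m) (Fin l) ℝ)
    (hsplit : B₂t = projCols A₁ X + Hm) :
    (Matrix.fromCols A₁ B₂t).rank ≤ A₁.rank + Hm.rank := by
  classical
  set U := LinearMap.range A₁.mulVecLin with hU
  set W := LinearMap.range Hm.mulVecLin with hW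
  have hF : LinearMap.range (Matrix.fromCols A₁ B₂t).mulVecLin ≤ U ⊔ W := by
    rintro x ⟨v, rfl⟩
    have hveq : v = Sum.elim (v ∘ Sum.inl) (v ∘ Sum.inr) := by funext z; cases z <;> rfl
    have hv : (Matrix.fromCols A₁ B₂t).mulVecLin v
        = A₁ *ᵥ (v ∘ Sum.inl) +
          (projCols A₁ X *ᵥ (v ∘ Sum.inr) + Hm *ᵥ (v ∘ Sum.inr)) := by
      rw [Matrix.mulVecLin_apply]
      conv_lhs => rw [hveq]
      rw [Matrix.fromCols_mulVec_sumElim, hsplit, Matrix.add_mulVec]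
    rw [hv]
    refine Submodule.add_mem _ (Submodule.mem_sup_left ⟨_, rfl⟩)
      (Submodule.add_mem _
        (Submodule.mem_sup_left (range_projCols_le A₁ X ⟨_, rfl⟩))
        (Submodule.mem_sup_right ⟨_, rfl⟩))
  have hle : (Matrix.fromCols A₁ B₂t).rank ≤ Module.finrank ℝ ↥(U ⊔ W) :=
    Submodule.finrank_mono hF
  have hsum := Submodule.finrank_sup_add_finrank_inf_eq U W
  have hUr : Module.finrank ℝ U = A₁.rank := rfl
  have hWr : Module.finrank ℝ W = Hm.rank := rfl
  omega

end Rank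
lemma rearrange {l : ℕ} (s : ℕ) (d t : Fin l → ℝ) (hd0 : ∀ j, 0 ≤ d j)
    (hmono : ∀ j j' : Fin l, (j : ℕ) ≤ (j' : ℕ) → d j' ≤ d j)
    (ht0 : ∀ j, 0 ≤ t j) (ht1 : ∀ j, t j ≤ 1)
    (hsum : (l : ℝ) - s ≤ ∑ j : Fin l, t j) :
    (∑ j : Fin l, if s ≤ (j : ℕ) then d j else (0:ℝ)) ≤ ∑ j : Fin l, d j * t j := by
  classical
  by_cases hs : l ≤ s
  · have hz : (∑ j : Fin l, if s ≤ (j : ℕ) then d j else 0) = 0 :=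
      Finset.sum_eq_zero fun j _ => if_neg (by have := j.2; omega)
    rw [hz]
    exact Finset.sum_nonneg fun j _ => mul_nonneg (hd0 j) (ht0 j)
  · push_neg at hs
    have ha0 : 0 ≤ d ⟨s, hs⟩ := hd0 ⟨s, hs⟩
    set a := d (⟨s, hs⟩ : Fin l) with ha
    have key : ∀ j : Fin l,
        (if s ≤ (j : ℕ) then d j else 0) + a * (t j - (if s ≤ (j : ℕ) then (1:ℝ) else 0))
          ≤ d j * t j := by
      intro j
      by_cases hj : s ≤ (j : ℕ)
      · rw [if_pos hj, if_pos hj]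
        have hda : d j ≤ a := hmono ⟨s, hs⟩ j hj
        have h1 : a * (t j - 1) ≤ d j * (t j - 1) :=
          mul_le_mul_of_nonpos_right hda (by linarith [ht1 j])
        nlinarith [h1]
      · rw [if_neg hj, if_neg hj]
        have had : a ≤ d j := hmono j ⟨s, hs⟩ (Nat.le_of_lt (Nat.lt_of_not_le hj))
        have := mul_le_mul_of_nonneg_right had (ht0 j)
        linarith
    have hχcard : (∑ j : Fin l, if s ≤ (j : ℕ) then (1:ℝ) else 0) ≤ (l : ℝ) - s := by
      rw [Finset.sum_boole]
      have hcard : (Finset.univ.filter fun j : Fin l => s ≤ (j : ℕ)).card ≤ l - s := by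
        have hmaps : ∀ j ∈ Finset.univ.filter (fun j : Fin l => s ≤ (j : ℕ)),
            (j : ℕ) - s ∈ Finset.range (l - s) := by
          intro j hj
          have h1 := (Finset.mem_filter.mp hj).2
          have h2 := j.2
          simp only [Finset.mem_range]
          omega
        have hinj : Set.InjOn (fun j : Fin l => (j : ℕ) - s)
            ↑(Finset.univ.filter (fun j : Fin l => s ≤ (j : ℕ))) := by
          intro x hx y hy hxy
          have hx' := (Finset.mem_filter.mp (Finset.mem_coe.mp hx)).2
          have hy' := (Finset.mem_filter.mp (Finset.mem_coe.mp hy)).2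
          have hval : (x : ℕ) - s = (y : ℕ) - s := hxy
          exact Fin.ext (by omega)
        have := Finset.card_le_card_of_injOn _ hmaps hinj
        simpa using this
      calc ((Finset.univ.filter fun j : Fin l => s ≤ (j : ℕ)).card : ℝ)
          ≤ ((l - s : ℕ) : ℝ) := by exact_mod_cast hcard
        _ ≤ (l : ℝ) - s := by
            rw [Nat.cast_sub (le_of_lt hs)]
    calc (∑ j : Fin l, if s ≤ (j : ℕ) then d j else 0)
        ≤ (∑ j : Fin l, if s ≤ (j : ℕ) then d j else 0) +
            a * ((∑ j : Fin l, t j) - ∑ j : Fin l, if s ≤ (j : ℕ) then (1:ℝ) else 0) := by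
          have : 0 ≤ a * ((∑ j : Fin l, t j) - ∑ j : Fin l, if s ≤ (j : ℕ) then (1:ℝ) else 0) :=
            mul_nonneg ha0 (by linarith)
          linarith
      _ = ∑ j : Fin l, ((if s ≤ (j : ℕ) then d j else 0) +
            a * (t j - (if s ≤ (j : ℕ) then (1:ℝ) else 0))) := by
          rw [Finset.sum_add_distrib, ← Finset.mul_sum]
          congr 1
          rw [Finset.sum_sub_distrib]
      _ ≤ ∑ j : Fin l, d j * t j := Finset.sum_le_sum fun j _ => key j
lemma matrix_eq_of_mulVec {n p : ℕ} (M N : Matrix (Fin p) (Fin n) ℝ)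
    (h : ∀ j, M *ᵥ Pi.single j 1 = N *ᵥ Pi.single j 1) : M = N := by
  ext i j
  have := congrFun (h j) i
  rwa [Matrix.mulVec_single_one, Matrix.mulVec_single_one] at this

lemma euclid_coord_eq_inner {l : ℕ} (y : EuclideanSpace ℝ (Fin l)) (i : Fin l) :
    y i = inner ℝ (show EuclideanSpace ℝ (Fin l) from WithLp.toLp 2 (Pi.single i 1)) y := by
  simp [PiLp.inner_apply, RCLike.inner_apply, Pi.single_apply]

lemma ey_diag {m l : ℕ} (s : ℕ) (D : Matrix (Fin m) (Fin l) ℝ)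
    (hDdiag : ∀ (i : Fin m) (j : Fin l), (i : ℕ) ≠ (j : ℕ) → D i j = 0)
    (hDnonneg : ∀ (i : Fin m) (j : Fin l), 0 ≤ D i j)
    (hDmono : ∀ (i i' : Fin m) (j j' : Fin l),
      (i : ℕ) = (j : ℕ) → (i' : ℕ) = (j' : ℕ) → (i : ℕ) ≤ (i' : ℕ) → D i' j' ≤ D i j)
    (C : Matrix (Fin m) (Fin l) ℝ) (hC : C.rank ≤ s) :
    (∑ j : Fin l, if s ≤ (j : ℕ) then (∑ i, D i j ^ 2) else (0:ℝ)) ≤ frobSq (D - C) := by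
  classical
  set d : Fin l → ℝ := fun j => ∑ i, D i j ^ 2 with hd
  -- `DᵀD` is diagonal with entries `d`
  have hDTD : Dᵀ * D = Matrix.diagonal d := by
    ext j j'
    by_cases h : j = j'
    · subst h
      simp [Matrix.mul_apply, Matrix.diagonal_apply_eq, hd, sq]
    · rw [Matrix.diagonal_apply_ne _ h, Matrix.mul_apply]
      refine Finset.sum_eq_zero fun i _ => ?_
      rcases eq_or_ne (i : ℕ) (j : ℕ) with hij | hij
      · have hij' : (i : ℕ) ≠ (j' : ℕ) := by
          intro hc
          exact h (Fin.ext (hij.symm.trans hc))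
        rw [hDdiag i j' hij', mul_zero]
      · rw [Matrix.transpose_apply, hDdiag i j hij, zero_mul]
  have hd0 : ∀ j, 0 ≤ d j := fun j => Finset.sum_nonneg fun i _ => sq_nonneg _
  have hdval : ∀ (j : Fin l) (h : (j : ℕ) < m), d j = D ⟨(j : ℕ), h⟩ j ^ 2 := by
    intro j h
    rw [hd]
    refine Finset.sum_eq_single (⟨(j : ℕ), h⟩ : Fin m) (fun i _ hne => ?_) (fun h' => absurd (Finset.mem_univ _) h')
    rw [hDdiag i j (fun hc => hne (Fin.ext (by simpa using hc)))]
    simp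
  have hdzero : ∀ j : Fin l, m ≤ (j : ℕ) → d j = 0 := by
    intro j hj
    rw [hd]
    refine Finset.sum_eq_zero fun i _ => ?_
    rw [hDdiag i j (by have := i.2; omega)]
    simp
  have hdmono : ∀ j j' : Fin l, (j : ℕ) ≤ (j' : ℕ) → d j' ≤ d j := by
    intro j j' hjj
    by_cases h' : (j' : ℕ) < m
    · have hj : (j : ℕ) < m := lt_of_le_of_lt hjj h'
      rw [hdval j' h', hdval j hj]
      have h1 := hDmono ⟨(j : ℕ), hj⟩ ⟨(j' : ℕ), h'⟩ j j' rfl rfl hjj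
      exact pow_le_pow_left₀ (hDnonneg _ _) h1 2
    · rw [hdzero j' (le_of_not_gt h')]
      exact hd0 j
  -- kernel of `C` and the orthogonal projection onto it
  set V : Submodule ℝ (Fin l → ℝ) := LinearMap.ker C.mulVecLin with hV
  set eqv := WithLp.linearEquiv 2 ℝ (Fin l → ℝ) with heqv
  set VE : Submodule ℝ (EuclideanSpace ℝ (Fin l)) := V.comap eqv.toLinearMap with hVE
  have hfinV : C.rank + Module.finrank ℝ V = l := by
    have h1 := LinearMap.finrank_range_add_finrank_ker C.mulVecLin
    rwa [Module.finrank_pi, Fintype.card_fin] at h1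
  have hfinVE : Module.finrank ℝ VE = Module.finrank ℝ V := by
    rw [hVE, Submodule.comap_equiv_eq_map_symm]
    exact LinearEquiv.finrank_map_eq _ _
  set f : EuclideanSpace ℝ (Fin l) →ₗ[ℝ] EuclideanSpace ℝ (Fin l) :=
    VE.subtype ∘ₗ (Submodule.orthogonalProjectionOnto VE).toLinearMap with hf
  set g : (Fin l → ℝ) →ₗ[ℝ] (Fin l → ℝ) := eqv.conj f with hg
  set Pr := LinearMap.toMatrix' g with hPr
  have hPrmulvec : ∀ x : Fin l → ℝ, Pr *ᵥ x = g x := fun x => by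
    rw [← Matrix.toLin'_apply, hPr, Matrix.toLin'_toMatrix']
  have hgf : ∀ x : Fin l → ℝ, g x = eqv (f (eqv.symm x)) := fun x => by
    rw [hg, LinearEquiv.conj_apply]; rfl
  have hfmem : ∀ y : EuclideanSpace ℝ (Fin l), f y ∈ VE := fun y =>
    (Submodule.orthogonalProjectionOnto VE y).2
  have hff : ∀ y, f (f y) = f y := by
    intro y
    show ((Submodule.orthogonalProjectionOnto VE (f y) : VE) : EuclideanSpace ℝ (Fin l)) = f y
    exact congrArg Subtype.val (Submodule.orthogonalProjectionOnto_mem_subspace_eq_self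
      (Submodule.orthogonalProjectionOnto VE y))
  -- C * Pr = 0
  have hCPr : C * Pr = 0 := by
    apply matrix_eq_of_mulVec
    intro j
    rw [← Matrix.mulVec_mulVec, hPrmulvec]
    have hmem : g (Pi.single j 1) ∈ V := by
      rw [hgf]
      exact (hfmem (eqv.symm (Pi.single j 1)))
    have : C.mulVecLin (g (Pi.single j 1)) = 0 := hmem
    rw [Matrix.zero_mulVec]; exact this
  -- Pr is idempotent
  have hidem : Pr * Pr = Pr := by
    apply matrix_eq_of_mulVec
    intro j
    rw [← Matrix.mulVec_mulVec, hPrmulvec, hPrmulvec, hgf, hgf,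
      LinearEquiv.symm_apply_apply, hff]
  -- Pr is symmetric
  have hsym : Prᵀ = Pr := by
    ext i j
    rw [Matrix.transpose_apply]
    have happ : ∀ a b : Fin l, Pr a b = g (Pi.single b 1) a := by
      intro a b
      rw [hPr, LinearMap.toMatrix'_apply]
    rw [happ j i, happ i j]
    have hgc : ∀ a b : Fin l, g (Pi.single b 1) a =
        f (show EuclideanSpace ℝ (Fin l) from WithLp.toLp 2 (Pi.single b 1)) a := fun a b => by
      rw [hgf]; rfl
    rw [hgc, hgc]
    rw [euclid_coord_eq_inner (f _) j, euclid_coord_eq_inner (f _) i]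
    have h1 := Submodule.inner_starProjection_left_eq_right VE
      (show EuclideanSpace ℝ (Fin l) from WithLp.toLp 2 (Pi.single j 1))
      (show EuclideanSpace ℝ (Fin l) from WithLp.toLp 2 (Pi.single i 1))
    calc (inner ℝ (show EuclideanSpace ℝ (Fin l) from WithLp.toLp 2 (Pi.single j 1)) (f (show EuclideanSpace ℝ (Fin l) from WithLp.toLp 2 (Pi.single i 1))) : ℝ)
        = inner ℝ (f (show EuclideanSpace ℝ (Fin l) from WithLp.toLp 2 (Pi.single j 1))) (show EuclideanSpace ℝ (Fin l) from WithLp.toLp 2 (Pi.single i 1)) := h1.symm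
      _ = inner ℝ (show EuclideanSpace ℝ (Fin l) from WithLp.toLp 2 (Pi.single i 1)) (f (show EuclideanSpace ℝ (Fin l) from WithLp.toLp 2 (Pi.single j 1))) := real_inner_comm _ _
  -- trace of Pr
  have htrace : Matrix.trace Pr = (Module.finrank ℝ VE : ℝ) := by
    have h1 : Matrix.trace Pr = LinearMap.trace ℝ (Fin l → ℝ) g := by
      rw [LinearMap.trace_eq_matrix_trace ℝ (Pi.basisFun ℝ (Fin l)) g,
        LinearMap.toMatrix_eq_toMatrix', hPr]
    have h2 : LinearMap.trace ℝ (Fin l → ℝ) g = LinearMap.trace ℝ _ f := by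
      rw [hg]; exact LinearMap.trace_conj' f eqv
    have h3 : LinearMap.trace ℝ _ f = (Module.finrank ℝ VE : ℝ) := by
      rw [hf, LinearMap.trace_comp_comm']
      have hid : (Submodule.orthogonalProjectionOnto VE).toLinearMap ∘ₗ VE.subtype = LinearMap.id :=
        LinearMap.ext fun x => Submodule.orthogonalProjectionOnto_mem_subspace_eq_self x
      rw [hid, LinearMap.trace_id]
    rw [h1, h2, h3]
  -- diagonal entries of Pr are in [0,1]
  have hPrdiag : ∀ j, Pr j j = ∑ i, Pr i j ^ 2 := by
    intro j
    have hPP : Pr j j = (Prᵀ * Pr) j j := by rw [hsym, hidem]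
    rw [hPP, Matrix.mul_apply]
    refine Finset.sum_congr rfl fun i _ => ?_
    rw [Matrix.transpose_apply, sq]
  have ht0 : ∀ j, 0 ≤ Pr j j := fun j => by
    rw [hPrdiag j]; exact Finset.sum_nonneg fun i _ => sq_nonneg _
  have ht1 : ∀ j, Pr j j ≤ 1 := by
    intro j
    have h1 : Pr j j ^ 2 ≤ Pr j j := by
      conv_rhs => rw [hPrdiag j]
      exact Finset.single_le_sum (fun i _ => sq_nonneg (Pr i j)) (Finset.mem_univ j)
    nlinarith [ht0 j]
  -- sum of diagonal entries
  have hsumt : (l : ℝ) - s ≤ ∑ j, Pr j j := by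
    have h1 : (∑ j, Pr j j) = Matrix.trace Pr := rfl
    rw [h1, htrace, hfinVE]
    have h2 : C.rank ≤ l := by omega
    have h3 : Module.finrank ℝ V = l - C.rank := by omega
    rw [h3, Nat.cast_sub h2]
    have h4 : (C.rank : ℝ) ≤ s := by exact_mod_cast hC
    linarith
  -- the main chain
  have step1 : frobSq ((D - C) * Pr) ≤ frobSq (D - C) := frobSq_mul_proj_le _ _ hsym hidem
  have step2 : (D - C) * Pr = D * Pr := by rw [Matrix.sub_mul, hCPr, sub_zero]
  have step3 : frobSq (D * Pr) = ∑ j, d j * Pr j j := by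
    rw [frobSq_eq_trace]
    have h1 : (D * Pr)ᵀ * (D * Pr) = Pr * (Matrix.diagonal d * Pr) := by
      rw [Matrix.transpose_mul, hsym, ← hDTD]
      simp only [Matrix.mul_assoc]
    rw [h1, Matrix.trace_mul_comm, Matrix.mul_assoc, hidem]
    rw [Matrix.trace]
    refine Finset.sum_congr rfl fun j _ => ?_
    rw [Matrix.diag_apply, Matrix.diagonal_mul]
  calc (∑ j : Fin l, if s ≤ (j : ℕ) then (∑ i, D i j ^ 2) else (0:ℝ))
      ≤ ∑ j, d j * Pr j j := rearrange s d (fun j => Pr j j) hd0 hdmono ht0 ht1 hsumt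
    _ = frobSq (D * Pr) := step3.symm
    _ = frobSq ((D - C) * Pr) := by rw [step2]
    _ ≤ frobSq (D - C) := step1
/-- Theorem 1 (Golub–Hoffman–Stewart). Let `A = (A₁ A₂)` with `rank A₁ = k ≤ r`, and let
`P⊥_{A₁}(A₂) = P D Qᵀ` be an SVD of the projected residual. Then
`B̃₂ := P_{A₁}(A₂) + H_{r−k}(P⊥_{A₁}(A₂))` gives a feasible block matrix `(A₁ B̃₂)` of rank
at most `r`, and it is optimal among all `B₂` with `rank (A₁ B₂) ≤ r`. -/
theorem golub_hoffman_stewart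
    (m k l r : ℕ) (hkr : k ≤ r)
    (A₁ : Matrix (Fin m) (Fin k) ℝ) (A₂ : Matrix (Fin m) (Fin l) ℝ)
    (hA₁ : A₁.rank = k)
    (P : Matrix (Fin m) (Fin m) ℝ) (Q : Matrix (Fin l) (Fin l) ℝ)
    (D : Matrix (Fin m) (Fin l) ℝ)
    (hP : P ∈ Matrix.orthogonalGroup (Fin m) ℝ)
    (hQ : Q ∈ Matrix.orthogonalGroup (Fin l) ℝ)
    (hDdiag : ∀ (i : Fin m) (j : Fin l), (i : ℕ) ≠ (j : ℕ) → D i j = 0)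
    (hDnonneg : ∀ (i : Fin m) (j : Fin l), 0 ≤ D i j)
    (hDmono : ∀ (i i' : Fin m) (j j' : Fin l),
      (i : ℕ) = (j : ℕ) → (i' : ℕ) = (j' : ℕ) → (i : ℕ) ≤ (i' : ℕ) → D i' j' ≤ D i j)
    (hSVD : projOrthCols A₁ A₂ = P * D * Qᵀ)
    (B₂tilde : Matrix (Fin m) (Fin l) ℝ)
    (hB₂tilde : B₂tilde = projCols A₁ A₂ +
      P * (Matrix.of fun (i : Fin m) (j : Fin l) => if (i : ℕ) < r - k then D i j else 0) * Qᵀ) :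
    (Matrix.fromCols A₁ B₂tilde).rank ≤ r ∧
    ∀ B₂ : Matrix (Fin m) (Fin l) ℝ, (Matrix.fromCols A₁ B₂).rank ≤ r →
      frobNorm (A₂ - B₂tilde) ≤ frobNorm (A₂ - B₂) := by
  obtain ⟨hP1, hP2⟩ := orth_facts P hP
  obtain ⟨hQ1, hQ2⟩ := orth_facts Q hQ
  set D' : Matrix (Fin m) (Fin l) ℝ :=
    Matrix.of fun (i : Fin m) (j : Fin l) => if (i : ℕ) < r - k then D i j else 0 with hD'
  -- Part 1: the rank bound
  have hrank1 : (Matrix.fromCols A₁ B₂tilde).rank ≤ r := by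
    have h1 := rank_part1 A₁ A₂ (P * D' * Qᵀ) B₂tilde hB₂tilde
    have hDfac : D' = Matrix.diagonal (fun i : Fin m => if (i : ℕ) < r - k then (1:ℝ) else 0) * D := by
      ext i j
      rw [Matrix.diagonal_mul]
      by_cases hi : (i : ℕ) < r - k <;> simp [hD', hi]
    have hrankD' : D'.rank ≤ r - k := by
      rw [hDfac]
      refine le_trans (Matrix.rank_mul_le_left _ _) ?_
      rw [Matrix.rank_diagonal]
      have hinj : Function.Injective
          (fun x : {i : Fin m // (if (i : ℕ) < r - k then (1:ℝ) else 0) ≠ 0} =>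
            (⟨(x.1 : ℕ), by
              rcases x with ⟨i, hi⟩
              by_contra hcon
              exact hi (if_neg hcon)⟩ : Fin (r - k))) := by
        intro x y hxy
        have h' : (x.1 : ℕ) = (y.1 : ℕ) := congrArg (fun z : Fin (r - k) => (z : ℕ)) hxy
        exact Subtype.ext (Fin.ext h')
      exact le_trans (Fintype.card_le_of_injective _ hinj) (by simp)
    have hrankH : (P * D' * Qᵀ).rank ≤ r - k :=
      le_trans (le_trans (Matrix.rank_mul_le_left _ _) (Matrix.rank_mul_le_right _ _)) hrankD'
    calc (Matrix.fromCols A₁ B₂tilde).rank ≤ A₁.rank + (P * D' * Qᵀ).rank := h1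
      _ ≤ k + (r - k) := by rw [hA₁]; exact Nat.add_le_add_left hrankH k
      _ = r := by omega
  refine ⟨hrank1, ?_⟩
  intro B₂ hB₂
  set T := ∑ j : Fin l, if r - k ≤ (j : ℕ) then (∑ i, D i j ^ 2) else (0:ℝ) with hT
  -- A₂ - B₂tilde = P * (D - D') * Qᵀ
  have hsub : A₂ - B₂tilde = P * (D - D') * Qᵀ := by
    have hA2 : A₂ = projCols A₁ A₂ + projOrthCols A₁ A₂ := (proj_add_projOrth A₁ A₂).symm
    rw [hB₂tilde]
    calc A₂ - (projCols A₁ A₂ + P * D' * Qᵀ)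
        = projOrthCols A₁ A₂ - P * D' * Qᵀ := by
          have hstep : A₂ - (projCols A₁ A₂ + P * D' * Qᵀ) =
              (projCols A₁ A₂ + projOrthCols A₁ A₂) - (projCols A₁ A₂ + P * D' * Qᵀ) := by
            rw [← hA2]
          rw [hstep]
          abel
      _ = P * D * Qᵀ - P * D' * Qᵀ := by rw [hSVD]
      _ = P * (D - D') * Qᵀ := by rw [Matrix.mul_sub, Matrix.sub_mul]
  have hfrobtilde : frobSq (A₂ - B₂tilde) = T := by
    rw [hsub, frobSq_mul_orth Q hQ2, frobSq_orth_mul P hP2]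
    rw [show frobSq (D - D') = ∑ j, ∑ i, ((D - D') i j) ^ 2 from Finset.sum_comm]
    rw [hT]
    refine Finset.sum_congr rfl fun j _ => ?_
    by_cases hj : r - k ≤ (j : ℕ)
    · rw [if_pos hj]
      refine Finset.sum_congr rfl fun i _ => ?_
      by_cases hi : (i : ℕ) < r - k
      · have hne : (i : ℕ) ≠ (j : ℕ) := by omega
        simp [Matrix.sub_apply, hD', if_pos hi, hDdiag i j hne]
      · simp [Matrix.sub_apply, hD', if_neg hi]
    · rw [if_neg hj]
      refine Finset.sum_eq_zero fun i _ => ?_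
      by_cases hi : (i : ℕ) < r - k
      · simp [Matrix.sub_apply, hD', if_pos hi]
      · have hne : (i : ℕ) ≠ (j : ℕ) := by omega
        simp [Matrix.sub_apply, hD', if_neg hi, hDdiag i j hne]
  -- lower bound for an arbitrary feasible B₂
  have hCrank : (projOrthCols A₁ B₂).rank ≤ r - k := by
    have h := rank_constraint A₁ B₂ hB₂
    rw [hA₁] at h
    omega
  set C := projOrthCols A₁ B₂ with hCdef
  set C₂ := Pᵀ * C * Q with hC₂
  have hC₂rank : C₂.rank ≤ r - k := by
    rw [hC₂, Matrix.mul_assoc]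
    exact le_trans (Matrix.rank_mul_le_right _ _)
      (le_trans (Matrix.rank_mul_le_left _ _) hCrank)
  have hPC : P * C₂ * Qᵀ = C := by
    rw [hC₂]
    rw [show P * (Pᵀ * C * Q) * Qᵀ = (P * Pᵀ) * (C * (Q * Qᵀ)) by
      simp only [Matrix.mul_assoc], hP1, hQ1, Matrix.one_mul, Matrix.mul_one]
  have hlow : T ≤ frobSq (A₂ - B₂) := by
    have hdecomp := frobSq_decomp A₁ (A₂ - B₂)
    have h1 : frobSq (projOrthCols A₁ (A₂ - B₂)) ≤ frobSq (A₂ - B₂) := by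
      rw [hdecomp]
      linarith [frobSq_nonneg (projCols A₁ (A₂ - B₂))]
    have h2 : projOrthCols A₁ (A₂ - B₂) = P * D * Qᵀ - C := by
      rw [projOrthCols_sub, hSVD]
    have h3 : P * D * Qᵀ - C = P * (D - C₂) * Qᵀ := by
      rw [← hPC, Matrix.mul_sub, Matrix.sub_mul]
    have h4 : frobSq (P * (D - C₂) * Qᵀ) = frobSq (D - C₂) := by
      rw [frobSq_mul_orth Q hQ2, frobSq_orth_mul P hP2]
    have h5 := ey_diag (r - k) D hDdiag hDnonneg hDmono C₂ hC₂rank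
    calc T ≤ frobSq (D - C₂) := h5
      _ = frobSq (projOrthCols A₁ (A₂ - B₂)) := by rw [h2, h3, h4]
      _ ≤ frobSq (A₂ - B₂) := h1
  have hfinal : frobSq (A₂ - B₂tilde) ≤ frobSq (A₂ - B₂) := by
    rw [hfrobtilde]; exact hlow
  have hfn : ∀ X : Matrix (Fin m) (Fin l) ℝ, frobNorm X = Real.sqrt (frobSq X) :=
    fun X => rfl
  rw [hfn, hfn]
  exact Real.sqrt_le_sqrt hfinal
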